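/- Let b₁,…,b_r ∈ ℤ^n and let σ = {x ∈ ℝ^n : ⟨b_i,x⟩ ≥ 0 for i = 1,…,r}. Assume σ spans ℝ^n as a real vector space (σ is n-dimensional with apex 0). Then σ^∨ = Cone(b₁,…,b_r), i.e., the dual cone of σ equals the set of all nonnegative real linear combinations of b₁,…,b_r. -/

import Mathlib

open Finset RealInnerProductSpace Topology

/-- The canonical map `ℤ^n → ℝ^n`. -/
def coeR {n : ℕ} (x : Fin n → ℤ) : Fin n → ℝ := fun i => (x i : ℝ)

/-- The standard inner product on `ℝ^n`. -/
def innerR {n : ℕ} (m x : Fin n → ℝ) : ℝ := ∑ i, m i * x i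

/-- The cone of all nonnegative real combinations of the integer vectors `b i`. -/
def ratCone {n r : ℕ} (b : Fin r → Fin n → ℤ) : Set (Fin n → ℝ) :=
  {x | ∃ lam : Fin r → ℝ, (∀ i, 0 ≤ lam i) ∧ x = ∑ i, lam i • coeR (b i)}

/-- The dual cone of a subset of `ℝ^n`. -/
def dualCone {n : ℕ} (σ : Set (Fin n → ℝ)) : Set (Fin n → ℝ) :=
  {m | ∀ u ∈ σ, 0 ≤ innerR m u}



/-- Conic Carathéodory: any nonnegative combination of `v` is a nonnegative combination
whose support indexes a linearly independent family. -/
lemma conic_carath {E : Type*} [AddCommGroup E] [Module ℝ E] {r : ℕ} (v : Fin r → E) :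
    ∀ (k : ℕ) (lam : Fin r → ℝ), (Finset.univ.filter (fun i => lam i ≠ 0)).card ≤ k →
      (∀ i, 0 ≤ lam i) →
      ∃ mu : Fin r → ℝ, (∀ i, 0 ≤ mu i) ∧ (∑ i, mu i • v i = ∑ i, lam i • v i) ∧
        LinearIndependent ℝ (fun i : {i : Fin r // mu i ≠ 0} => v (i : Fin r)) := by
  intro k
  induction k with
  | zero =>
    intro lam hcard hnn
    have hz : ∀ i, lam i = 0 := by
      intro i; by_contra h
      have hi : i ∈ Finset.univ.filter (fun i => lam i ≠ 0) := by simp [h]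
      have := Finset.card_pos.mpr ⟨i, hi⟩; omega
    haveI : IsEmpty {i : Fin r // lam i ≠ 0} := ⟨fun ⟨i, hi⟩ => hi (hz i)⟩
    exact ⟨lam, hnn, rfl, linearIndependent_empty_type⟩
  | succ k ih =>
    intro lam hcard hnn
    by_cases hli : LinearIndependent ℝ (fun i : {i : Fin r // lam i ≠ 0} => v (i : Fin r))
    · exact ⟨lam, hnn, rfl, hli⟩
    · have key : ∀ c : Fin r → ℝ, (∑ i, c i • v i = 0) → (∀ i, c i ≠ 0 → lam i ≠ 0) →
          (∃ i, 0 < c i) →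
          ∃ mu : Fin r → ℝ, (∀ i, 0 ≤ mu i) ∧ (∑ i, mu i • v i = ∑ i, lam i • v i) ∧
            LinearIndependent ℝ (fun i : {i : Fin r // mu i ≠ 0} => v (i : Fin r)) := by
        rintro c hc0 hsupp ⟨i₁, hi₁⟩
        obtain ⟨i₀, hi₀T, hmin⟩ := (Finset.univ.filter fun i => 0 < c i).exists_min_image
          (fun i => lam i / c i) ⟨i₁, by simp [hi₁]⟩
        have hci₀ : 0 < c i₀ := (Finset.mem_filter.mp hi₀T).2
        set t := lam i₀ / c i₀ with ht_def
        have ht : 0 ≤ t := div_nonneg (hnn i₀) hci₀.le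
        set lam' : Fin r → ℝ := fun i => lam i - t * c i with hlam'
        have h1 : ∀ i, 0 ≤ lam' i := by
          intro i
          rcases le_or_gt (c i) 0 with h | h
          · have : t * c i ≤ 0 := mul_nonpos_of_nonneg_of_nonpos ht h
            simp only [hlam']; linarith [hnn i]
          · have := hmin i (by simp [h])
            have : t * c i ≤ lam i := (le_div_iff₀ h).mp this
            simp only [hlam']; linarith
        have h2 : ∑ i, lam' i • v i = ∑ i, lam i • v i := by
          simp only [hlam', sub_smul, Finset.sum_sub_distrib, mul_smul, ← Finset.smul_sum, hc0,
            smul_zero, sub_zero]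
        have h3 : lam' i₀ = 0 := by
          simp only [hlam', ht_def, div_mul_cancel₀ _ hci₀.ne', sub_self]
        have hss : Finset.univ.filter (fun i => lam' i ≠ 0) ⊂
            Finset.univ.filter (fun i => lam i ≠ 0) := by
          constructor
          · intro i hi
            simp only [Finset.mem_filter, Finset.mem_univ, true_and] at hi ⊢
            intro hlami
            apply hi
            have hci : c i = 0 := by
              by_contra hc; exact hsupp i hc hlami
            simp [hlam', hlami, hci]
          · intro hsub
            have hi₀mem : i₀ ∈ Finset.univ.filter (fun i => lam i ≠ 0) := by
              simp only [Finset.mem_filter, Finset.mem_univ, true_and]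
              exact hsupp i₀ hci₀.ne'
            have := hsub hi₀mem
            simp only [Finset.mem_filter, Finset.mem_univ, true_and] at this
            exact this h3
        have hcard' : (Finset.univ.filter (fun i => lam' i ≠ 0)).card ≤ k := by
          have := Finset.card_lt_card hss
          omega
        obtain ⟨mu, hmu1, hmu2, hmu3⟩ := ih lam' hcard' h1
        exact ⟨mu, hmu1, hmu2.trans h2, hmu3⟩
      obtain ⟨g, hg0, j, hgj⟩ := Fintype.not_linearIndependent_iff.mp hli
      set c : Fin r → ℝ := fun i => if h : lam i ≠ 0 then g ⟨i, h⟩ else 0 with hc_def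
      have hcsupp : ∀ i, c i ≠ 0 → lam i ≠ 0 := by
        intro i hi
        by_contra h
        simp [hc_def, h] at hi
      have hcsum : ∑ i, c i • v i = 0 := by
        have e1 : ∑ i, c i • v i = ∑ i ∈ Finset.univ.filter (fun i => lam i ≠ 0), c i • v i := by
          refine (Finset.sum_filter_of_ne ?_).symm
          intro x _ hx
          intro h
          apply hx
          simp [hc_def, h]
        have e2 : ∑ i ∈ Finset.univ.filter (fun i => lam i ≠ 0), c i • v i
            = ∑ i : {i : Fin r // lam i ≠ 0}, c (i : Fin r) • v (i : Fin r) :=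
          Finset.sum_subtype _ (by simp) _
        have e3 : ∑ i : {i : Fin r // lam i ≠ 0}, c (i : Fin r) • v (i : Fin r)
            = ∑ i : {i : Fin r // lam i ≠ 0}, g i • v (i : Fin r) := by
          refine Finset.sum_congr rfl fun i _ => ?_
          simp [hc_def, i.2]
        rw [e1, e2, e3, hg0]
      have hcj : c (j : Fin r) = g j := by simp [hc_def, j.2]
      rcases lt_or_gt_of_ne hgj with hneg | hpos
      · refine key (-c) ?_ (fun i hi => hcsupp i (by simpa using hi)) ⟨j, by simp [hcj]; linarith⟩
        simp [hcsum]
      · exact key c hcsum hcsupp ⟨j, by rw [hcj]; exact hpos⟩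

section Closed


variable {E : Type*} [NormedAddCommGroup E] [NormedSpace ℝ E] [FiniteDimensional ℝ E]
  {r : ℕ} (v : Fin r → E)

/-- For a finset `S` indexing a linearly independent subfamily, the cone supported on `S`
is closed. -/
lemma isClosed_cone_of_li (S : Finset (Fin r))
    (hli : LinearIndependent ℝ (fun i : ↥S => v (i : Fin r))) :
    IsClosed {x : E | ∃ lam : Fin r → ℝ, (∀ i, 0 ≤ lam i) ∧ (∀ i, lam i ≠ 0 → i ∈ S) ∧
      x = ∑ i, lam i • v i} := by
  classical
  let L : (↥S → ℝ) →ₗ[ℝ] E :=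
    { toFun := fun lam => ∑ i : ↥S, lam i • v (i : Fin r)
      map_add' := by intro x y; simp [add_smul, Finset.sum_add_distrib]
      map_smul' := by intro c x; simp [mul_smul, Finset.smul_sum]
    }
  have hker : LinearMap.ker L = ⊥ := by
    rw [LinearMap.ker_eq_bot']
    intro m hm
    have := Fintype.linearIndependent_iff.mp hli m hm
    funext i; exact this i
  have hemb : IsClosedEmbedding L :=
    LinearMap.isClosedEmbedding_of_injective hker
  have horth : IsClosed {lam : ↥S → ℝ | ∀ i, 0 ≤ lam i} := by
    have : {lam : ↥S → ℝ | ∀ i, 0 ≤ lam i} = ⋂ i, {lam : ↥S → ℝ | 0 ≤ lam i} := by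
      ext lam; simp [Set.mem_iInter]
    rw [this]
    exact isClosed_iInter fun i => isClosed_le continuous_const (continuous_apply i)
  have himg : {x : E | ∃ lam : Fin r → ℝ, (∀ i, 0 ≤ lam i) ∧ (∀ i, lam i ≠ 0 → i ∈ S) ∧
      x = ∑ i, lam i • v i} = L '' {lam : ↥S → ℝ | ∀ i, 0 ≤ lam i} := by
    ext x
    constructor
    · rintro ⟨lam, h1, h2, rfl⟩
      refine ⟨fun i => lam i, fun i => h1 i, ?_⟩
      show ∑ i : ↥S, lam i • v (i : Fin r) = ∑ i, lam i • v i
      rw [Finset.sum_coe_sort S (fun i => lam i • v i)]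
      refine Finset.sum_subset S.subset_univ fun i _ hi => ?_
      have : lam i = 0 := by by_contra h; exact hi (h2 i h)
      simp [this]
    · rintro ⟨m, hm, rfl⟩
      refine ⟨fun i => if h : i ∈ S then m ⟨i, h⟩ else 0, ?_, ?_, ?_⟩
      · intro i
        by_cases h : i ∈ S
        · simpa [h] using hm ⟨i, h⟩
        · simp [h]
      · intro i hi; by_contra h; simp [h] at hi
      · refine Eq.symm ?_
        show (∑ i, (if h : i ∈ S then m ⟨i, h⟩ else 0) • v i) = L m
        rw [← Finset.sum_subset S.subset_univ (fun i _ hi => by simp [hi]),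
          ← Finset.sum_coe_sort S (fun i => (if h : i ∈ S then m ⟨i, h⟩ else 0) • v i)]
        refine Finset.sum_congr rfl fun i _ => ?_
        simp [i.2]
  rw [himg]
  exact hemb.isClosedMap _ horth

/-- A finitely generated cone is closed. -/
lemma isClosed_cone :
    IsClosed {x : E | ∃ lam : Fin r → ℝ, (∀ i, 0 ≤ lam i) ∧ x = ∑ i, lam i • v i} := by
  classical
  have hunion : {x : E | ∃ lam : Fin r → ℝ, (∀ i, 0 ≤ lam i) ∧ x = ∑ i, lam i • v i}
      = ⋃ S : {S : Finset (Fin r) // LinearIndependent ℝ (fun i : ↥S => v (i : Fin r))},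
        {x : E | ∃ lam : Fin r → ℝ, (∀ i, 0 ≤ lam i) ∧ (∀ i, lam i ≠ 0 → i ∈ (S : Finset (Fin r))) ∧
          x = ∑ i, lam i • v i} := by
    ext x
    simp only [Set.mem_iUnion, Set.mem_setOf_eq]
    constructor
    · rintro ⟨lam, h1, rfl⟩
      obtain ⟨mu, hmu1, hmu2, hmu3⟩ := conic_carath v
        (Finset.univ.filter (fun i => lam i ≠ 0)).card lam le_rfl h1
      set S : Finset (Fin r) := Finset.univ.filter (fun i => mu i ≠ 0) with hS
      have hli : LinearIndependent ℝ (fun i : ↥S => v (i : Fin r)) := by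
        have hf : ∀ i : ↥S, mu (i : Fin r) ≠ 0 := by
          intro i; have := i.2; simp only [hS, Finset.mem_filter] at this; exact this.2
        exact hmu3.comp (fun i : ↥S => (⟨(i : Fin r), hf i⟩ : {i : Fin r // mu i ≠ 0}))
          (fun a b hab => Subtype.ext (by simpa using congrArg Subtype.val hab))
      exact ⟨⟨S, hli⟩, mu, hmu1, fun i hi => by simp [hS, hi], hmu2.symm⟩
    · rintro ⟨S, lam, h1, _, rfl⟩
      exact ⟨lam, h1, rfl⟩
  rw [hunion]
  exact isClosed_iUnion_of_finite fun S => isClosed_cone_of_li v S S.2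

end Closed

/-- Farkas' lemma in a finite-dimensional real inner product space. -/
lemma farkas {E : Type*} [NormedAddCommGroup E] [InnerProductSpace ℝ E] [FiniteDimensional ℝ E]
    {r : ℕ} (v : Fin r → E) :
    {m : E | ∀ u : E, (∀ i, 0 ≤ ⟪v i, u⟫) → 0 ≤ ⟪m, u⟫}
      = {x : E | ∃ lam : Fin r → ℝ, (∀ i, 0 ≤ lam i) ∧ x = ∑ i, lam i • v i} := by
  classical
  set Cs : Set E := {x : E | ∃ lam : Fin r → ℝ, (∀ i, 0 ≤ lam i) ∧ x = ∑ i, lam i • v i} with hCs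
  let C : ConvexCone ℝ E :=
    { carrier := Cs
      smul_mem' := by
        rintro c hc x ⟨lam, h1, rfl⟩
        exact ⟨fun i => c * lam i, fun i => mul_nonneg hc.le (h1 i),
          by simp [Finset.smul_sum, mul_smul]⟩
      add_mem' := by
        rintro x ⟨lam, h1, rfl⟩ y ⟨mu, h2, rfl⟩
        exact ⟨fun i => lam i + mu i, fun i => add_nonneg (h1 i) (h2 i),
          by simp [add_smul, Finset.sum_add_distrib]⟩ }
  have hCne : (C : Set E).Nonempty := ⟨0, ⟨0, fun i => le_rfl, by simp⟩⟩
  have hCcl : IsClosed (C : Set E) := isClosed_cone v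
  let P : ProperCone ℝ E :=
    { carrier := Cs
      add_mem' := fun hx hy => C.add_mem hx hy
      zero_mem' := ⟨0, fun _ => le_rfl, by simp⟩
      smul_mem' := by
        rintro c x ⟨lam, h1, rfl⟩
        exact ⟨fun i => (c : ℝ) * lam i, fun i => mul_nonneg c.2 (h1 i),
          by simp only [Finset.smul_sum, mul_smul]; rfl⟩
      isClosed' := hCcl }
  have hdd : (ProperCone.innerDual (ProperCone.innerDual (C : Set E) : Set E) : Set E) = C :=
    congrArg (fun K : ProperCone ℝ E => (K : Set E)) (ProperCone.innerDual_innerDual P)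
  -- identify the first dual with the halfspace intersection
  have hσ : (ProperCone.innerDual (C : Set E) : Set E) = {u : E | ∀ i, 0 ≤ ⟪v i, u⟫} := by
    ext u
    simp only [ProperCone.mem_innerDual, SetLike.mem_coe, Set.mem_setOf_eq]
    constructor
    · intro h i
      refine @h (v i) ⟨fun j => if j = i then 1 else 0, fun j => by positivity, ?_⟩
      simp [ite_smul]
    · rintro h x ⟨lam, h1, rfl⟩
      rw [sum_inner]
      refine Finset.sum_nonneg fun i _ => ?_
      rw [real_inner_smul_left]
      exact mul_nonneg (h1 i) (h i)
  ext m
  constructor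
  · intro hm
    have : m ∈ (ProperCone.innerDual (ProperCone.innerDual (C : Set E) : Set E) : Set E) := by
      intro u hu
      rw [hσ] at hu
      change 0 ≤ ⟪u, m⟫
      rw [real_inner_comm]
      exact hm u hu
    rw [hdd] at this
    exact this
  · intro hm u hu
    have : m ∈ (ProperCone.innerDual (ProperCone.innerDual (C : Set E) : Set E) : Set E) := by
      rw [hdd]; exact hm
    have := @this u (by rw [hσ]; exact hu)
    change 0 ≤ ⟪u, m⟫ at this
    rwa [real_inner_comm]

/-- If `σ = {x : ⟨b i, x⟩ ≥ 0, i = 1,…,r}` with `b i ∈ ℤ^n` spans `ℝ^n` (i.e. `σ` is an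
`n`-dimensional cone with apex `0`), then `σ^∨ = Cone(b₁,…,b_r)`. -/
theorem dual_of_halfspace_cone {n r : ℕ} (b : Fin r → Fin n → ℤ)
    (σ : Set (Fin n → ℝ)) (hσ : σ = {x | ∀ i, 0 ≤ innerR (coeR (b i)) x})
    (hspan : Submodule.span ℝ σ = ⊤) :
    dualCone σ = ratCone b := by
  subst hσ
  have hinner : ∀ m x : EuclideanSpace ℝ (Fin n), ⟪m, x⟫ =
      innerR (n := n) ((WithLp.equiv 2 _) m) ((WithLp.equiv 2 _) x) := by
    intro m x
    simp only [PiLp.inner_apply, RCLike.inner_apply, conj_trivial, innerR, WithLp.equiv,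
      Equiv.refl_apply]
    exact Finset.sum_congr rfl fun i _ => mul_comm _ _
  have key := farkas (E := EuclideanSpace ℝ (Fin n))
    (fun i => (WithLp.equiv 2 (Fin n → ℝ)).symm (coeR (b i)))
  ext m
  have hm := Set.ext_iff.mp key ((WithLp.equiv 2 (Fin n → ℝ)).symm m)
  simp only [Set.mem_setOf_eq, hinner] at hm
  constructor
  · intro h
    have := hm.mp ?_
    · obtain ⟨lam, h1, h2⟩ := this
      exact ⟨lam, h1, (WithLp.equiv 2 (Fin n → ℝ)).symm.injective
        (h2.trans (by simp [WithLp.equiv_symm_apply]))⟩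
    · intro u hu
      exact h ((WithLp.equiv 2 (Fin n → ℝ)) u) hu
  · rintro ⟨lam, h1, rfl⟩ u hu
    have := hm.mpr ⟨lam, h1, by simp [WithLp.equiv_symm_apply]⟩
    exact this ((WithLp.equiv 2 (Fin n → ℝ)).symm u) hu
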